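/- Let a, b, c, d and aᵢ, bᵢ, cᵢ, dᵢ (i = 1, 2, 3) be differentiable functions of t, let ξ = a e₁ + b e₂ + c e₃ + d e₄ and Xᵢ = aᵢ e₁ + bᵢ e₂ + cᵢ e₃ + dᵢ e₄ be the corresponding vector fields on ℝ⁴, and suppose that at every point ξ is a unit vector, the Xᵢ are orthonormal, and each Xᵢ is orthogonal to ξ (all with respect to g̃). Then the mean curvature H = (1/3) Σᵢ₌₁³ g̃(∇̃_{Xᵢ} Xᵢ, ξ) vanishes identically if and only if Σᵢ₌₁³ [aᵢ(bᵢ d − b dᵢ) + bᵢ(cᵢ d − c dᵢ) + dᵢ(a aᵢ' + b bᵢ' + c cᵢ' + d dᵢ')] = 0 identically. More precisely, Σᵢ₌₁³ g̃(∇̃_{Xᵢ} Xᵢ, ξ) = Σᵢ₌₁³ [aᵢ(bᵢ d − b dᵢ) + bᵢ(cᵢ d − c dᵢ) + dᵢ(a aᵢ' + b bᵢ' + c cᵢ' + d dᵢ')] at every point. -/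

import Mathlib

noncomputable section

/-- The left-invariant frame fields e₁,e₂,e₃,e₄ on ℝ⁴ (coordinates x,y,z,t = p 0,...,p 3). -/
def eVF (i : Fin 4) (p : Fin 4 → ℝ) : Fin 4 → ℝ :=
  ![![1, 0, 0, 0],
    ![p 3, 1, 0, 0],
    ![(p 3) ^ 2 / 2, p 3, 1, 0],
    ![0, 0, 0, 1]] i

/-- The matrix of the metric g̃ at a point with last coordinate t. -/
def gMat (t : ℝ) : Matrix (Fin 4) (Fin 4) ℝ :=
  !![1, -t, t ^ 2 / 2, 0;
     -t, 1 + t ^ 2, -t * (1 + t ^ 2 / 2), 0;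
     t ^ 2 / 2, -t * (1 + t ^ 2 / 2), 1 + t ^ 2 + t ^ 4 / 4, 0;
     0, 0, 0, 1]

/-- The metric g̃ as a bilinear form on each tangent space. -/
def gMet (p X Y : Fin 4 → ℝ) : ℝ :=
  ∑ i, ∑ j, gMat (p 3) i j * X i * Y j

/-- Partial derivative in direction of the i-th coordinate. -/
def pd (i : Fin 4) (f : (Fin 4 → ℝ) → ℝ) (p : Fin 4 → ℝ) : ℝ :=
  deriv (fun s => f (Function.update p i s)) (p i)

/-- The Christoffel symbols Γᵏᵢⱼ of g̃. -/
def Chr (p : Fin 4 → ℝ) (k i j : Fin 4) : ℝ :=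
  (1 / 2) * ∑ l, (gMat (p 3))⁻¹ k l *
    (pd i (fun q => gMat (q 3) j l) p + pd j (fun q => gMat (q 3) i l) p
      - pd l (fun q => gMat (q 3) i j) p)

/-- The Levi-Civita connection of g̃ in coordinates. -/
def nabla (X Y : (Fin 4 → ℝ) → (Fin 4 → ℝ)) (p : Fin 4 → ℝ) : Fin 4 → ℝ :=
  fun k => (∑ i, X p i * pd i (fun q => Y q k) p)
    + ∑ i, ∑ j, Chr p k i j * X p i * Y p j

/-- Lie bracket of vector fields on ℝ⁴. -/
def bracket (X Y : (Fin 4 → ℝ) → (Fin 4 → ℝ)) (p : Fin 4 → ℝ) : Fin 4 → ℝ :=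
  fderiv ℝ Y p (X p) - fderiv ℝ X p (Y p)

/-- The curvature tensor R̃(X,Y)Z = ∇̃_X ∇̃_Y Z − ∇̃_Y ∇̃_X Z − ∇̃_{[X,Y]} Z. -/
def Riem (X Y Z : (Fin 4 → ℝ) → (Fin 4 → ℝ)) (p : Fin 4 → ℝ) : Fin 4 → ℝ :=
  nabla X (nabla Y Z) p - nabla Y (nabla X Z) p - nabla (bracket X Y) Z p







/-! ### Auxiliary lemmas -/

def gInv (t : ℝ) : Matrix (Fin 4) (Fin 4) ℝ :=
  !![1 + t^2 + t^4/4, t + t^3/2, t^2/2, 0;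
     t + t^3/2, 1 + t^2, t, 0;
     t^2/2, t, 1, 0;
     0, 0, 0, 1]

lemma gMat_inv (t : ℝ) : (gMat t)⁻¹ = gInv t := by
  apply Matrix.inv_eq_right_inv
  ext i j
  fin_cases i <;> fin_cases j <;>
    simp [gMat, gInv, Matrix.mul_apply, Fin.sum_univ_four] <;> ring

lemma pd_comp3 (i : Fin 4) (f : ℝ → ℝ) (p : Fin 4 → ℝ) :
    pd i (fun q => f (q 3)) p = if i = 3 then deriv f (p 3) else 0 := by
  unfold pd
  rcases eq_or_ne i 3 with h | h
  · subst h; simp [Function.update_self]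
  · have h3 : ∀ s : ℝ, Function.update p i s 3 = p 3 :=
      fun s => Function.update_of_ne (Ne.symm h) _ _
    simp [h3, h]

def gd (t : ℝ) : Matrix (Fin 4) (Fin 4) ℝ :=
  !![0, -1, t, 0;
     -1, 2*t, -(1 + 3*t^2/2), 0;
     t, -(1 + 3*t^2/2), 2*t + t^3, 0;
     0, 0, 0, 0]

lemma deriv_gMat (j l : Fin 4) (x : ℝ) :
    deriv (fun t => gMat t j l) x = gd x j l := by
  have h1 : HasDerivAt (fun t : ℝ => -t) (-1) x := (hasDerivAt_id' x).neg
  have h2 : HasDerivAt (fun t : ℝ => t ^ 2 / 2) x x := by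
    simpa using (hasDerivAt_pow 2 x).div_const 2
  have h3 : HasDerivAt (fun t : ℝ => 1 + t ^ 2) (2 * x) x := by
    exact ((hasDerivAt_const x (1:ℝ)).add (hasDerivAt_pow 2 x)).congr_deriv (by norm_num)
  have h4 : HasDerivAt (fun t : ℝ => -t * (1 + t ^ 2 / 2)) (-(1 + 3*x^2/2)) x := by
    have := h1.mul ((hasDerivAt_const x (1:ℝ)).add h2)
    exact this.congr_deriv (by simp only [Pi.add_apply]; ring)
  have h5 : HasDerivAt (fun t : ℝ => 1 + t ^ 2 + t ^ 4 / 4) (2*x + x^3) x := by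
    have := h3.add ((hasDerivAt_pow 4 x).div_const 4)
    exact this.congr_deriv (by norm_num)
  fin_cases j <;> fin_cases l <;>
    simp only [gMat, gd, Matrix.cons_val', Matrix.cons_val_zero, Matrix.cons_val_one,
      Matrix.head_cons, Matrix.empty_val', Matrix.cons_val_fin_one, Matrix.head_fin_const,
      Fin.isValue, Matrix.cons_val_two, Matrix.cons_val_three, Matrix.tail_cons,
      Matrix.of_apply] <;>
    first
      | exact deriv_const _ _
      | exact h1.deriv
      | exact h2.deriv
      | exact h3.deriv
      | exact h4.deriv
      | exact h5.deriv

lemma pd_gMat (i j l : Fin 4) (p : Fin 4 → ℝ) :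
    pd i (fun q => gMat (q 3) j l) p = if i = 3 then gd (p 3) j l else 0 := by
  rw [pd_comp3 i (fun t => gMat t j l) p, deriv_gMat]

/-- The Christoffel symbols as explicit functions of t. -/
def chrV (t : ℝ) : Fin 4 → Fin 4 → Fin 4 → ℝ :=
  ![![![0,0,0,-t/2], ![0,0,0,t^2/4-1/2], ![0,0,0,0], ![-t/2, t^2/4-1/2, 0, 0]],
    ![![0,0,0,-1/2], ![0,0,0,0], ![0,0,0,t^2/4-1/2], ![-1/2, 0, t^2/4-1/2, 0]],
    ![![0,0,0,0], ![0,0,0,-1/2], ![0,0,0,t/2], ![0, -1/2, t/2, 0]],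
    ![![0,1/2,-t/2,0], ![1/2,-t,1/2+3*t^2/4,0], ![-t/2,1/2+3*t^2/4,-t-t^3/2,0], ![0,0,0,0]]]

set_option maxHeartbeats 1000000 in
lemma chr_eq (p : Fin 4 → ℝ) (k i j : Fin 4) : Chr p k i j = chrV (p 3) k i j := by
  unfold Chr
  rw [gMat_inv]
  simp only [Fin.sum_univ_four, pd_gMat]
  fin_cases k <;> fin_cases i <;> fin_cases j <;>
    simp (config := { decide := true })
      [gInv, gd, chrV, Matrix.vecHead, Matrix.vecTail] <;> ring

/-- Coordinate components of a frame field A e₁ + B e₂ + C e₃ + D e₄. -/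
def Fv (A B C D : ℝ → ℝ) (t : ℝ) : Fin 4 → ℝ :=
  ![A t + B t * t + C t * (t ^ 2 / 2), B t + C t * t, C t, D t]

/-- t-derivatives of the coordinate components. -/
def dFv (A B C D : ℝ → ℝ) (t : ℝ) : Fin 4 → ℝ :=
  ![deriv A t + (deriv B t * t + B t) + (deriv C t * (t ^ 2 / 2) + C t * t),
    deriv B t + (deriv C t * t + C t), deriv C t, deriv D t]

lemma Fv_eq (A B C D : ℝ → ℝ) (q : Fin 4 → ℝ) (k : Fin 4) :
    (A (q 3) • eVF 0 q + B (q 3) • eVF 1 q + C (q 3) • eVF 2 q + D (q 3) • eVF 3 q) k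
      = Fv A B C D (q 3) k := by
  fin_cases k <;> simp [eVF, Fv]

lemma deriv_Fv (A B C D : ℝ → ℝ) (hA : Differentiable ℝ A) (hB : Differentiable ℝ B)
    (hC : Differentiable ℝ C) (_hD : Differentiable ℝ D) (t : ℝ) (k : Fin 4) :
    deriv (fun s => Fv A B C D s k) t = dFv A B C D t k := by
  have hB' : HasDerivAt (fun s => B s * s) (deriv B t * t + B t) t := by
    exact ((hB.differentiableAt.hasDerivAt (x := t)).mul (hasDerivAt_id' t)).congr_deriv (by ring)
  have hC2 : HasDerivAt (fun s : ℝ => s ^ 2 / 2) t t := by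
    simpa using (hasDerivAt_pow 2 t).div_const 2
  have hC' : HasDerivAt (fun s => C s * (s ^ 2 / 2))
      (deriv C t * (t ^ 2 / 2) + C t * t) t := by
    exact (hC.differentiableAt.hasDerivAt (x := t)).mul hC2
  have hCt : HasDerivAt (fun s => C s * s) (deriv C t * t + C t) t := by
    exact ((hC.differentiableAt.hasDerivAt (x := t)).mul (hasDerivAt_id' t)).congr_deriv (by ring)
  fin_cases k
  · show deriv (fun s => Fv A B C D s 0) t = _
    have h : HasDerivAt (fun s => A s + B s * s + C s * (s ^ 2 / 2))
        (deriv A t + (deriv B t * t + B t) + (deriv C t * (t ^ 2 / 2) + C t * t)) t :=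
      ((hA.differentiableAt.hasDerivAt).add hB').add hC'
    have heq : (fun s => Fv A B C D s 0) = fun s => A s + B s * s + C s * (s ^ 2 / 2) := by
      funext s; simp [Fv]
    rw [heq, h.deriv]; simp [dFv]
  · show deriv (fun s => Fv A B C D s 1) t = _
    have h : HasDerivAt (fun s => B s + C s * s)
        (deriv B t + (deriv C t * t + C t)) t := (hB.differentiableAt.hasDerivAt).add hCt
    have heq : (fun s => Fv A B C D s 1) = fun s => B s + C s * s := by
      funext s; simp [Fv]
    rw [heq, h.deriv]; simp [dFv]
  · show deriv (fun s => Fv A B C D s 2) t = _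
    have heq : (fun s => Fv A B C D s 2) = C := by funext s; simp [Fv]
    rw [heq]; simp [dFv]
  · show deriv (fun s => Fv A B C D s 3) t = _
    have heq : (fun s => Fv A B C D s 3) = D := by funext s; simp [Fv]
    rw [heq]; simp [dFv]

set_option maxHeartbeats 2000000 in
set_option maxRecDepth 100000 in
lemma key (A B C D a b c d : ℝ → ℝ) (hA : Differentiable ℝ A) (hB : Differentiable ℝ B)
    (hC : Differentiable ℝ C) (hD : Differentiable ℝ D) (p : Fin 4 → ℝ) :
    gMet p (nabla
        (fun q => A (q 3) • eVF 0 q + B (q 3) • eVF 1 q + C (q 3) • eVF 2 q + D (q 3) • eVF 3 q)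
        (fun q => A (q 3) • eVF 0 q + B (q 3) • eVF 1 q + C (q 3) • eVF 2 q + D (q 3) • eVF 3 q) p)
      (a (p 3) • eVF 0 p + b (p 3) • eVF 1 p + c (p 3) • eVF 2 p + d (p 3) • eVF 3 p)
    = A (p 3) * (B (p 3) * d (p 3) - b (p 3) * D (p 3))
      + B (p 3) * (C (p 3) * d (p 3) - c (p 3) * D (p 3))
      + D (p 3) * (a (p 3) * deriv A (p 3) + b (p 3) * deriv B (p 3)
          + c (p 3) * deriv C (p 3) + d (p 3) * deriv D (p 3)) := by
  have hpd : ∀ (i k : Fin 4), pd i (fun q => Fv A B C D (q 3) k) p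
      = if i = 3 then dFv A B C D (p 3) k else 0 := fun i k =>
    (pd_comp3 i (fun s => Fv A B C D s k) p).trans
      (by rw [deriv_Fv A B C D hA hB hC hD])
  have hnab : ∀ k : Fin 4, nabla
      (fun q => A (q 3) • eVF 0 q + B (q 3) • eVF 1 q + C (q 3) • eVF 2 q + D (q 3) • eVF 3 q)
      (fun q => A (q 3) • eVF 0 q + B (q 3) • eVF 1 q + C (q 3) • eVF 2 q + D (q 3) • eVF 3 q) p k
      = Fv A B C D (p 3) 3 * dFv A B C D (p 3) k
        + ∑ i, ∑ j, chrV (p 3) k i j * Fv A B C D (p 3) i * Fv A B C D (p 3) j := by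
    intro k
    unfold nabla
    simp only [Fv_eq]
    simp only [hpd, chr_eq, Fin.sum_univ_four]
    simp (config := { decide := true })
  unfold gMet
  simp only [Fin.sum_univ_four, hnab, Fv_eq]
  simp only [Fv, dFv, chrV, gMat, Fin.sum_univ_four, Matrix.of_apply, Matrix.cons_val', Matrix.cons_val_zero, Matrix.cons_val_one, Matrix.cons_val_two, Matrix.cons_val_three, Matrix.head_cons, Matrix.tail_cons, Matrix.empty_val', Matrix.cons_val_fin_one, Fin.isValue, smul_eq_mul, Matrix.vecHead]
  ring

/-- The minimality criterion of Theorem 4: with ξ = a e₁ + b e₂ + c e₃ + d e₄ a unit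
normal and {X₁,X₂,X₃} (Xᵢ = aᵢe₁ + bᵢe₂ + cᵢe₃ + dᵢe₄) an orthonormal tangent frame,
all coefficients functions of t alone, the sum Σᵢ g̃(∇̃_{Xᵢ}Xᵢ, ξ) equals
Σᵢ [aᵢ(bᵢd − bdᵢ) + bᵢ(cᵢd − cdᵢ) + dᵢ(aaᵢ' + bbᵢ' + ccᵢ' + ddᵢ')]; in particular
the mean curvature H vanishes identically iff this expression vanishes identically. -/
theorem nil4_minimality_criterion
    (a b c d : ℝ → ℝ) (A B C D : Fin 3 → ℝ → ℝ)
    (ha : Differentiable ℝ a) (hb : Differentiable ℝ b)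
    (hc : Differentiable ℝ c) (hd : Differentiable ℝ d)
    (hA : ∀ i, Differentiable ℝ (A i)) (hB : ∀ i, Differentiable ℝ (B i))
    (hC : ∀ i, Differentiable ℝ (C i)) (hD : ∀ i, Differentiable ℝ (D i))
    (ξ : (Fin 4 → ℝ) → (Fin 4 → ℝ))
    (X : Fin 3 → (Fin 4 → ℝ) → (Fin 4 → ℝ))
    (hξ : ξ = fun q => a (q 3) • eVF 0 q + b (q 3) • eVF 1 q
      + c (q 3) • eVF 2 q + d (q 3) • eVF 3 q)
    (hX : ∀ i, X i = fun q => A i (q 3) • eVF 0 q + B i (q 3) • eVF 1 q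
      + C i (q 3) • eVF 2 q + D i (q 3) • eVF 3 q)
    (hunit : ∀ p : Fin 4 → ℝ, gMet p (ξ p) (ξ p) = 1)
    (horth : ∀ (p : Fin 4 → ℝ) (i : Fin 3), gMet p (X i p) (ξ p) = 0)
    (hon : ∀ (p : Fin 4 → ℝ) (i j : Fin 3),
      gMet p (X i p) (X j p) = if i = j then 1 else 0) :
    (∀ p : Fin 4 → ℝ,
      (∑ i, gMet p (nabla (X i) (X i) p) (ξ p))
        = ∑ i, (A i (p 3) * (B i (p 3) * d (p 3) - b (p 3) * D i (p 3))
            + B i (p 3) * (C i (p 3) * d (p 3) - c (p 3) * D i (p 3))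
            + D i (p 3) * (a (p 3) * deriv (A i) (p 3) + b (p 3) * deriv (B i) (p 3)
              + c (p 3) * deriv (C i) (p 3) + d (p 3) * deriv (D i) (p 3)))) ∧
    ((∀ p : Fin 4 → ℝ,
        (1 / 3 : ℝ) * ∑ i, gMet p (nabla (X i) (X i) p) (ξ p) = 0)
      ↔ (∀ t : ℝ,
        (∑ i, (A i t * (B i t * d t - b t * D i t)
            + B i t * (C i t * d t - c t * D i t)
            + D i t * (a t * deriv (A i) t + b t * deriv (B i) t
              + c t * deriv (C i) t + d t * deriv (D i) t))) = 0)) := by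
  have hmain : ∀ p : Fin 4 → ℝ,
      (∑ i, gMet p (nabla (X i) (X i) p) (ξ p))
        = ∑ i, (A i (p 3) * (B i (p 3) * d (p 3) - b (p 3) * D i (p 3))
            + B i (p 3) * (C i (p 3) * d (p 3) - c (p 3) * D i (p 3))
            + D i (p 3) * (a (p 3) * deriv (A i) (p 3) + b (p 3) * deriv (B i) (p 3)
              + c (p 3) * deriv (C i) (p 3) + d (p 3) * deriv (D i) (p 3))) := by
    intro p
    refine Finset.sum_congr rfl fun i _ => ?_
    rw [hX i, hξ]
    exact key (A i) (B i) (C i) (D i) a b c d (hA i) (hB i) (hC i) (hD i) p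
  refine ⟨hmain, ?_, ?_⟩
  · intro h t
    have h1 := h (fun _ => t)
    rw [hmain (fun _ => t)] at h1
    have h2 : (1/3 : ℝ) * (∑ i, (A i t * (B i t * d t - b t * D i t)
            + B i t * (C i t * d t - c t * D i t)
            + D i t * (a t * deriv (A i) t + b t * deriv (B i) t
              + c t * deriv (C i) t + d t * deriv (D i) t))) = 0 := h1
    linarith
  · intro h p
    rw [hmain p, h (p 3), mul_zero]
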